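/- arXiv:1209.3687 — 2 statements merged into one kernel-verified Lean document; each statement's English description precedes it below -/
import Mathlib

section
/- Let X, Y be Hilbert spaces, A ∈ L(X), C ∈ L(X,Y), and suppose there exists H ∈ L(X) with H ≥ A*HA ≥ 0 and Γ_{n,A}[H] ≥ C*C. Then the series Σ_{j=0}^{∞} C(n+j-1, j) A^{*j} C* C A^j converges in the strong operator topology to a bounded positive semidefinite operator G with G ≤ H. -/
open ContinuousLinearMap Filter


/-- backward difference `D f j = f j - f (j+1)` -/
private def Dd (f : ℕ → ℝ) : ℕ → ℝ := fun j => f j - f (j + 1)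

private lemma Dd_iter_succ (f : ℕ → ℝ) (k j : ℕ) :
    Dd^[k+1] f j = Dd^[k] f j - Dd^[k] f (j+1) := by
  rw [Function.iterate_succ_apply']; rfl

/-- boundedness of iterated differences -/
private lemma Dd_iter_bound {f : ℕ → ℝ} (h0 : ∀ j, 0 ≤ f j) (h1 : ∀ j, 0 ≤ Dd f j) :
    ∀ k j, |Dd^[k] f j| ≤ 2 ^ k * f 0 := by
  have hanti : Antitone f := antitone_nat_of_succ_le fun j => by
    have := h1 j; simp [Dd] at this; linarith
  intro k
  induction k with
  | zero => intro j; simp only [Function.iterate_zero, id_eq, pow_zero, one_mul]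
            rw [abs_of_nonneg (h0 j)]; exact hanti (Nat.zero_le j)
  | succ k ih => intro j
                 rw [Dd_iter_succ]
                 calc |Dd^[k] f j - Dd^[k] f (j+1)| ≤ |Dd^[k] f j| + |Dd^[k] f (j+1)| := abs_sub _ _
                 _ ≤ 2^k * f 0 + 2^k * f 0 := add_le_add (ih j) (ih (j+1))
                 _ = 2^(k+1) * f 0 := by ring

/-- single descent step -/
private lemma Dd_step {f : ℕ → ℝ} (k : ℕ) (M : ℝ)
    (hb : ∀ j, |Dd^[k] f j| ≤ M)
    (hnext : ∀ j, 0 ≤ Dd^[k+2] f j) :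
    ∀ j, 0 ≤ Dd^[k+1] f j := by
  intro j0
  by_contra hneg
  push_neg at hneg
  set u : ℕ → ℝ := Dd^[k+1] f with hu
  set w : ℕ → ℝ := Dd^[k] f with hw
  have huanti : Antitone u := antitone_nat_of_succ_le fun j => by
    have := hnext j; rw [Dd_iter_succ] at this; linarith
  set c : ℝ := -u j0 with hc
  have hcpos : 0 < c := by simp [hc]; linarith
  have key : ∀ m : ℕ, w j0 + m * c ≤ w (j0 + m) := by
    intro m
    induction m with
    | zero => simp
    | succ m ih =>
      have h2 : u (j0 + m) ≤ -c := by
        have := huanti (Nat.le_add_right j0 m); simp [hc] at this ⊢; linarith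
      have h3 : w (j0 + m + 1) = w (j0 + m) - u (j0 + m) := by
        have := Dd_iter_succ f k (j0 + m); rw [← hu, ← hw] at this; linarith
      push_cast
      rw [show j0 + (m+1) = j0 + m + 1 by ring, h3]
      linarith
  obtain ⟨m, hm⟩ := exists_nat_gt ((M - w j0) / c)
  have : (M - w j0) / c * c < m * c := by exact mul_lt_mul_of_pos_right hm hcpos
  rw [div_mul_cancel₀ _ (ne_of_gt hcpos)] at this
  have h4 := key m
  have h5 := (abs_le.mp (hb (j0 + m))).2
  linarith

/-- all intermediate iterated differences are nonnegative -/
private lemma Dd_iter_nonneg {f : ℕ → ℝ} {n : ℕ}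
    (h0 : ∀ j, 0 ≤ f j) (h1 : ∀ j, 0 ≤ Dd f j) (hn : ∀ j, 0 ≤ Dd^[n] f j) :
    ∀ k, k ≤ n → ∀ j, 0 ≤ Dd^[k] f j := by
  -- descending induction via n - d
  have main : ∀ d, ∀ j, 0 ≤ Dd^[n - d] f j := by
    intro d
    induction d with
    | zero => simpa using hn
    | succ d ih =>
      rcases Nat.lt_or_ge d n with hd | hd
      · -- n - (d+1) = (n - d) - 1 and n - d ≥ 1
        rcases Nat.eq_or_lt_of_le (Nat.one_le_iff_ne_zero.mpr (by omega : n - d ≠ 0)) with h1' | h1'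
        · -- n - d = 1, so n - (d+1) = 0
          have : n - (d+1) = 0 := by omega
          rw [this]; simpa using h0
        · -- n - d ≥ 2, write n - (d+1) = k+1 with k+2 = n - d
          obtain ⟨k, hk⟩ : ∃ k, n - d = k + 2 := ⟨n - d - 2, by omega⟩
          have hk1 : n - (d+1) = k + 1 := by omega
          rw [hk1]
          refine Dd_step k (2 ^ k * f 0) (Dd_iter_bound h0 h1 k) ?_
          rw [← hk]; exact ih
      · have : n - (d+1) = 0 := by omega
        rw [this]; simpa using h0
  intro k hk j
  have := main (n - k) j
  rwa [Nat.sub_sub_self hk] at this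

/-- Abel summation step -/
private lemma abel_step (a v : ℕ → ℝ) (N : ℕ) :
    ∑ j ∈ Finset.range N, (∑ i ∈ Finset.range (j+1), a i) * (v j - v (j+1))
      = ∑ i ∈ Finset.range N, a i * (v i - v N) := by
  induction N with
  | zero => simp
  | succ N ih =>
    rw [Finset.sum_range_succ, ih, Finset.sum_range_succ a,
        Finset.sum_range_succ (f := fun i => a i * (v i - v (N+1)))]
    have : ∑ i ∈ Finset.range N, a i * (v i - v (N+1))
        = ∑ i ∈ Finset.range N, a i * (v i - v N) + (∑ i ∈ Finset.range N, a i) * (v N - v (N+1)) := by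
      rw [Finset.sum_mul, ← Finset.sum_add_distrib]
      exact Finset.sum_congr rfl fun i _ => by ring
    rw [this]; ring

/-- hockey stick -/
private lemma hockey_nat (m : ℕ) : ∀ N, ∑ i ∈ Finset.range (N+1), (m + i).choose i = (m + N + 1).choose N
  | 0 => by simp
  | N+1 => by
    rw [Finset.sum_range_succ, hockey_nat m N,
        show m + (N+1) = m + N + 1 from by omega, show m + N + 1 + 1 = m + N + 1 + 1 from rfl]
    exact (Nat.choose_succ_succ (m+N+1) N).symm

private lemma hockey (m N : ℕ) :
    ∑ i ∈ Finset.range (N+1), ((m + i).choose i : ℝ) = ((m + N + 1).choose N : ℝ) := by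
  rw [← Nat.cast_sum, hockey_nat m N]

/-- the key summation inequality -/
private lemma key_sum_ineq (m : ℕ) : ∀ f : ℕ → ℝ, (∀ j, 0 ≤ f j) →
    (∀ k, k ≤ m + 1 → ∀ j, 0 ≤ Dd^[k] f j) →
    ∀ N, ∑ j ∈ Finset.range N, ((m + j).choose j : ℝ) * Dd^[m+1] f j ≤ f 0 := by
  induction m with
  | zero =>
    intro f h0 hk N
    have : ∑ j ∈ Finset.range N, ((0 + j).choose j : ℝ) * Dd^[1] f j
        = ∑ j ∈ Finset.range N, (f j - f (j+1)) := by
      refine Finset.sum_congr rfl fun j _ => ?_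
      simp [Dd]
    rw [this, Finset.sum_range_sub']
    have := h0 N; linarith
  | succ m ih =>
    intro f h0 hk N
    have hrw : ∀ j, ((m + 1 + j).choose j : ℝ) = ∑ i ∈ Finset.range (j+1), ((m + i).choose i : ℝ) := by
      intro j; rw [hockey m j, show m + j + 1 = m + 1 + j by ring]
    have hDd : ∀ j, Dd^[m+2] f j = Dd^[m+1] f j - Dd^[m+1] f (j+1) := fun j => Dd_iter_succ f (m+1) j
    calc ∑ j ∈ Finset.range N, ((m + 1 + j).choose j : ℝ) * Dd^[m+2] f j
        = ∑ j ∈ Finset.range N, (∑ i ∈ Finset.range (j+1), ((m + i).choose i : ℝ)) *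
            (Dd^[m+1] f j - Dd^[m+1] f (j+1)) := by
          refine Finset.sum_congr rfl fun j _ => by rw [hrw j, hDd j]
      _ = ∑ i ∈ Finset.range N, ((m + i).choose i : ℝ) * (Dd^[m+1] f i - Dd^[m+1] f N) :=
          abel_step _ _ N
      _ ≤ ∑ i ∈ Finset.range N, ((m + i).choose i : ℝ) * Dd^[m+1] f i := by
          refine Finset.sum_le_sum fun i _ => ?_
          have hvN : 0 ≤ Dd^[m+1] f N := hk (m+1) (by omega) N
          have : (0:ℝ) ≤ ((m + i).choose i : ℝ) := Nat.cast_nonneg _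
          nlinarith
      _ ≤ f 0 := ih f h0 (fun k hkk j => hk k (by omega) j) N
/-- `Γ_{n,A}[H] = Σ_{j=0}^n (-1)^j C(n,j) A^{*j} H A^j`. -/
noncomputable def Gamma {X : Type*} [NormedAddCommGroup X] [InnerProductSpace ℂ X]
    [CompleteSpace X] (A H : X →L[ℂ] X) (k : ℕ) : X →L[ℂ] X :=
  ∑ j ∈ Finset.range (k + 1),
    ((-1 : ℂ) ^ j * (Nat.choose k j : ℂ)) • (((adjoint A) ^ j) ∘L H ∘L (A ^ j))

section OperatorLemmas

open RCLike

variable {X Y : Type*} [NormedAddCommGroup X] [InnerProductSpace ℂ X] [CompleteSpace X]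
  [NormedAddCommGroup Y] [InnerProductSpace ℂ Y] [CompleteSpace Y]

local notation "⟪" x ", " y "⟫" => @inner ℂ _ _ x y

private lemma Gamma_zero (A H : X →L[ℂ] X) : Gamma A H 0 = H := by
  simp [Gamma, ContinuousLinearMap.one_def]

private lemma Gamma_succ (A H : X →L[ℂ] X) (k : ℕ) :
    Gamma A H (k+1) = Gamma A H k - adjoint A ∘L Gamma A H k ∘L A := by
  ext x
  have w : ℕ → X := fun j => ((adjoint A) ^ j) (H ((A ^ j) x))
  simp only [Gamma, coe_sum', Finset.sum_apply, smul_apply, comp_apply, sub_apply]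
  have hAright : ∀ j : ℕ, (A ^ (j+1)) x = (A ^ j) (A x) := fun j => by
    rw [pow_succ, mul_apply_eq_comp]
  have hAleft : ∀ (j : ℕ) (z : X), (adjoint A) (((adjoint A) ^ j) z) = ((adjoint A) ^ (j+1)) z :=
    fun j z => by rw [pow_succ', mul_apply_eq_comp]
  -- compute adjoint A applied to the sum
  rw [map_sum (adjoint A) _ (Finset.range (k+1))]
  simp only [map_smul]
  -- now rewrite each term
  have hterm : ∀ j : ℕ,
      ((-1:ℂ)^j * (Nat.choose k j : ℂ)) • (adjoint A) (((adjoint A)^j) (H ((A^j) (A x))))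
      = ((-1:ℂ)^j * (Nat.choose k j : ℂ)) • (((adjoint A)^(j+1)) (H ((A^(j+1)) x))) := by
    intro j; rw [hAleft, hAright]
  rw [Finset.sum_congr rfl (fun j _ => hterm j)]
  -- LHS : peel with sum_range_succ'
  rw [Finset.sum_range_succ' (fun j => ((-1:ℂ)^j * (Nat.choose (k+1) j : ℂ)) •
        (((adjoint A)^j) (H ((A^j) x)))) (k+1)]
  -- extend first RHS sum to range (k+2)
  have hext : ∑ j ∈ Finset.range (k+1), ((-1:ℂ)^j * (Nat.choose k j : ℂ)) •
        (((adjoint A)^j) (H ((A^j) x)))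
      = ∑ j ∈ Finset.range (k+2), ((-1:ℂ)^j * (Nat.choose k j : ℂ)) •
        (((adjoint A)^j) (H ((A^j) x))) := by
    rw [Finset.sum_range_succ (fun j => ((-1:ℂ)^j * (Nat.choose k j : ℂ)) •
          (((adjoint A)^j) (H ((A^j) x)))) (k+1)]
    simp [Nat.choose_succ_self]
  rw [hext, Finset.sum_range_succ' (fun j => ((-1:ℂ)^j * (Nat.choose k j : ℂ)) •
        (((adjoint A)^j) (H ((A^j) x)))) (k+1)]
  rw [add_sub_right_comm, ← Finset.sum_sub_distrib]
  congr 1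
  · refine Finset.sum_congr rfl fun j _ => ?_
    rw [← sub_smul]
    congr 1
    rw [Nat.choose_succ_succ k j]
    push_cast; ring
  · norm_num

private lemma cs_pos_re {P : X →L[ℂ] X} (hP : P.IsPositive) (x y : X) :
    (re ⟪P x, y⟫) ^ 2 ≤ re ⟪P x, x⟫ * re ⟪P y, y⟫ := by
  have hsym := hP.1
  have key : ∀ t : ℝ, 0 ≤ (⟪P x, x⟫:ℂ).re * (t * t) + (2 * (⟪P x, y⟫:ℂ).re) * t
      + (⟪P y, y⟫:ℂ).re := by
    intro t
    have h0 := hP.2 ((t : ℂ) • x + y)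
    rw [reApplyInnerSelf] at h0
    have hexp : ⟪P ((t:ℂ) • x + y), (t:ℂ) • x + y⟫
        = (starRingEnd ℂ) (t:ℂ) * ((t:ℂ) * ⟪P x, x⟫) + (starRingEnd ℂ) (t:ℂ) * ⟪P x, y⟫
          + ((t:ℂ) * ⟪P y, x⟫ + ⟪P y, y⟫) := by
      rw [map_add, map_smul, inner_add_left, inner_smul_left, inner_add_right,
        inner_add_right, inner_smul_right, inner_smul_right]
      ring
    rw [hexp] at h0
    have hyx : (⟪P y, x⟫:ℂ).re = (⟪P x, y⟫:ℂ).re := by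
      have h1' : ⟪P y, x⟫ = ⟪y, P x⟫ := hsym y x
      have h1 : ⟪P y, x⟫ = (starRingEnd ℂ) ⟪P x, y⟫ := by
        rw [h1', ← inner_conj_symm]
      rw [h1, Complex.conj_re]
    simp only [Complex.conj_ofReal, RCLike.re_to_complex, Complex.add_re,
      Complex.re_ofReal_mul] at h0
    rw [hyx] at h0
    ring_nf at h0 ⊢
    linarith
  have hd := discrim_le_zero key
  rw [discrim] at hd
  simp only [RCLike.re_to_complex]
  nlinarith

private lemma cs_pos {P : X →L[ℂ] X} (hP : P.IsPositive) (x y : X) :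
    ‖⟪P x, y⟫‖ ≤ Real.sqrt (re ⟪P x, x⟫) * Real.sqrt (re ⟪P y, y⟫) := by
  rcases eq_or_ne (⟪P x, y⟫ : ℂ) 0 with hz | hz
  · rw [hz]
    simp only [norm_zero]
    positivity
  · set z : ℂ := ⟪P x, y⟫ with hzdef
    set c : ℂ := (‖z‖ : ℂ) / z with hc
    have hcnorm : ‖c‖ = 1 := by
      rw [hc, norm_div, Complex.norm_real, norm_norm, div_self (norm_ne_zero_iff.mpr hz)]
    have h1 : ⟪P x, c • y⟫ = (‖z‖ : ℂ) := by
      rw [inner_smul_right, ← hzdef, hc, div_mul_cancel₀ _ hz]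
    have h2 : re ⟪P (c • y), c • y⟫ = re ⟪P y, y⟫ := by
      rw [map_smul, inner_smul_left, inner_smul_right, ← mul_assoc, RCLike.conj_mul, hcnorm]
      norm_num
    have h3 := cs_pos_re hP x (c • y)
    rw [h1, h2] at h3
    have h4 : re ((‖z‖ : ℂ)) = ‖z‖ := by simp
    rw [h4] at h3
    have ha : 0 ≤ re ⟪P x, x⟫ := hP.2 x
    have hb : 0 ≤ re ⟪P y, y⟫ := hP.2 y
    have h5 : ‖z‖ ≤ Real.sqrt (re ⟪P x, x⟫ * re ⟪P y, y⟫) := by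
      have := Real.sqrt_le_sqrt h3
      rwa [Real.sqrt_sq (norm_nonneg z)] at this
    rwa [Real.sqrt_mul ha] at h5

private lemma pos_norm_bound {P : X →L[ℂ] X} (hP : P.IsPositive) {B : ℝ} (hB : 0 ≤ B)
    (hPB : ∀ y, re ⟪P y, y⟫ ≤ B * ‖y‖ ^ 2) (x : X) :
    ‖P x‖ ≤ Real.sqrt (re ⟪P x, x⟫) * Real.sqrt B := by
  rcases eq_or_ne (P x) 0 with h0 | h0
  · rw [h0, norm_zero]; positivity
  · have h1 := cs_pos hP x (P x)
    have h2 : ‖⟪P x, P x⟫‖ = ‖P x‖ ^ 2 := by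
      rw [inner_self_eq_norm_sq_to_K]
      simp [norm_pow]
    rw [h2] at h1
    have h3 : Real.sqrt (re ⟪P (P x), P x⟫) ≤ Real.sqrt B * ‖P x‖ := by
      have h4 : re ⟪P (P x), P x⟫ ≤ B * ‖P x‖ ^ 2 := hPB (P x)
      have := Real.sqrt_le_sqrt h4
      rwa [Real.sqrt_mul hB, Real.sqrt_sq (norm_nonneg _)] at this
    have h5 : ‖P x‖ ^ 2 ≤ Real.sqrt (re ⟪P x, x⟫) * (Real.sqrt B * ‖P x‖) :=
      h1.trans (by
        have : (0:ℝ) ≤ Real.sqrt (re ⟪P x, x⟫) := Real.sqrt_nonneg _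
        exact mul_le_mul_of_nonneg_left h3 this)
    have hpos : 0 < ‖P x‖ := norm_pos_iff.mpr h0
    nlinarith [Real.sqrt_nonneg (re ⟪P x, x⟫), Real.sqrt_nonneg B]

private lemma adj_pow_inner (A : X →L[ℂ] X) : ∀ (j : ℕ) (z y : X),
    ⟪((adjoint A) ^ j) z, y⟫ = ⟪z, (A ^ j) y⟫ := by
  intro j
  induction j with
  | zero => intro z y; simp
  | succ j ih =>
    intro z y
    rw [pow_succ', mul_apply_eq_comp, adjoint_inner_left, ih, pow_succ, mul_apply_eq_comp]

private lemma term_inner (A : X →L[ℂ] X) (C : X →L[ℂ] Y) (j : ℕ) (x y : X) :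
    ⟪(((adjoint A) ^ j) ∘L (adjoint C ∘L C) ∘L (A ^ j)) x, y⟫
      = ⟪C ((A ^ j) x), C ((A ^ j) y)⟫ := by
  simp only [comp_apply]
  rw [adj_pow_inner, adjoint_inner_left]

/-- the partial sum operator -/
private noncomputable def Sop (A : X →L[ℂ] X) (C : X →L[ℂ] Y) (n N : ℕ) : X →L[ℂ] X :=
  ∑ j ∈ Finset.range N, (((n + j - 1).choose j : ℕ) : ℂ) •
    (((adjoint A) ^ j) ∘L (adjoint C ∘L C) ∘L (A ^ j))

private lemma Sop_apply (A : X →L[ℂ] X) (C : X →L[ℂ] Y) (n N : ℕ) (x : X) :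
    Sop A C n N x = ∑ j ∈ Finset.range N, (((n + j - 1).choose j : ℕ) : ℂ) •
      ((((adjoint A) ^ j) ∘L (adjoint C ∘L C) ∘L (A ^ j)) x) := by
  simp [Sop, coe_sum', Finset.sum_apply]

private lemma Sop_inner (A : X →L[ℂ] X) (C : X →L[ℂ] Y) (n N : ℕ) (x y : X) :
    ⟪Sop A C n N x, y⟫ = ∑ j ∈ Finset.range N, (((n + j - 1).choose j : ℕ) : ℂ) *
      ⟪C ((A ^ j) x), C ((A ^ j) y)⟫ := by
  rw [Sop_apply, sum_inner]
  refine Finset.sum_congr rfl fun j _ => ?_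
  rw [inner_smul_left, term_inner]
  simp

private lemma Sop_symm (A : X →L[ℂ] X) (C : X →L[ℂ] Y) (n N : ℕ) (x y : X) :
    ⟪Sop A C n N x, y⟫ = ⟪x, Sop A C n N y⟫ := by
  rw [Sop_inner, ← inner_conj_symm, Sop_inner, map_sum]
  refine Finset.sum_congr rfl fun j _ => ?_
  rw [map_mul, ← inner_conj_symm]
  simp

private lemma Sop_re (A : X →L[ℂ] X) (C : X →L[ℂ] Y) (n N : ℕ) (x : X) :
    re ⟪Sop A C n N x, x⟫
      = ∑ j ∈ Finset.range N, (((n + j - 1).choose j : ℕ) : ℝ) * ‖C ((A ^ j) x)‖ ^ 2 := by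
  rw [Sop_inner, map_sum]
  refine Finset.sum_congr rfl fun j _ => ?_
  rw [inner_self_eq_norm_sq_to_K]
  simp only [RCLike.re_to_complex, Complex.coe_algebraMap]
  norm_cast

private lemma gamma_re_eq_Dd (A H : X →L[ℂ] X) (x : X) : ∀ (k j : ℕ),
    re ⟪Gamma A H k ((A ^ j) x), (A ^ j) x⟫
      = Dd^[k] (fun i => re ⟪H ((A ^ i) x), (A ^ i) x⟫) j := by
  intro k
  induction k with
  | zero => intro j; rw [Gamma_zero]; simp
  | succ k ih =>
    intro j
    rw [Gamma_succ, sub_apply, inner_sub_left, map_sub, comp_apply, comp_apply,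
      adjoint_inner_left]
    have hA : A ((A ^ j) x) = (A ^ (j+1)) x := by rw [pow_succ', mul_apply_eq_comp]
    rw [hA, ih j, ih (j+1), Dd_iter_succ]

private lemma sop_re_le (n : ℕ) (hn : 1 ≤ n) (A : X →L[ℂ] X) (C : X →L[ℂ] Y) (H : X →L[ℂ] X)
    (h1 : (H - adjoint A ∘L H ∘L A).IsPositive)
    (h2 : (adjoint A ∘L H ∘L A).IsPositive)
    (h3 : (Gamma A H n - adjoint C ∘L C).IsPositive) (x : X) (N : ℕ) :
    re ⟪Sop A C n N x, x⟫ ≤ re ⟪H x, x⟫ := by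
  have hH_pos : H.IsPositive := by
    have := h1.add h2
    rwa [sub_add_cancel] at this
  set h : ℕ → ℝ := fun i => re ⟪H ((A ^ i) x), (A ^ i) x⟫ with hh
  have f0 : ∀ j, 0 ≤ h j := fun j => hH_pos.re_inner_nonneg_left _
  have f1 : ∀ j, 0 ≤ Dd h j := by
    intro j
    have := h1.re_inner_nonneg_left ((A ^ j) x)
    rw [sub_apply, inner_sub_left, map_sub, comp_apply, comp_apply, adjoint_inner_left] at this
    have hA : A ((A ^ j) x) = (A ^ (j+1)) x := by rw [pow_succ', mul_apply_eq_comp]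
    rw [hA] at this
    exact this
  have flow : ∀ j, ‖C ((A ^ j) x)‖ ^ 2 ≤ Dd^[n] h j := by
    intro j
    have := h3.re_inner_nonneg_left ((A ^ j) x)
    rw [sub_apply, inner_sub_left, map_sub, comp_apply, adjoint_inner_left] at this
    rw [← gamma_re_eq_Dd]
    have hC : re ⟪C ((A ^ j) x), C ((A ^ j) x)⟫ = ‖C ((A ^ j) x)‖ ^ 2 :=
      inner_self_eq_norm_sq _
    linarith
  have fn0 : ∀ j, 0 ≤ Dd^[n] h j := fun j => le_trans (by positivity) (flow j)
  have allk := Dd_iter_nonneg f0 f1 fn0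
  obtain ⟨m, rfl⟩ : ∃ m, n = m + 1 := ⟨n - 1, by omega⟩
  rw [Sop_re]
  have hcoef : ∀ j : ℕ, (m + 1 + j - 1).choose j = (m + j).choose j := by
    intro j; congr 1; omega
  calc ∑ j ∈ Finset.range N, (((m + 1 + j - 1).choose j : ℕ) : ℝ) * ‖C ((A ^ j) x)‖ ^ 2
      ≤ ∑ j ∈ Finset.range N, (((m + 1 + j - 1).choose j : ℕ) : ℝ) * Dd^[m+1] h j := by
        refine Finset.sum_le_sum fun j _ => ?_
        exact mul_le_mul_of_nonneg_left (flow j) (Nat.cast_nonneg _)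
    _ = ∑ j ∈ Finset.range N, (((m + j).choose j : ℕ) : ℝ) * Dd^[m+1] h j := by
        refine Finset.sum_congr rfl fun j _ => ?_
        rw [hcoef j]
    _ ≤ h 0 := key_sum_ineq m h f0 (fun k hk j => allk k hk j) N
    _ = re ⟪H x, x⟫ := by simp [hh]

private theorem main_thm (n : ℕ) (hn : 1 ≤ n) (A : X →L[ℂ] X) (C : X →L[ℂ] Y) (H : X →L[ℂ] X)
    (h1 : (H - adjoint A ∘L H ∘L A).IsPositive)
    (h2 : (adjoint A ∘L H ∘L A).IsPositive)
    (h3 : (Gamma A H n - adjoint C ∘L C).IsPositive) :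
    ∃ G : X →L[ℂ] X, G.IsPositive ∧ (H - G).IsPositive ∧
      ∀ x, Tendsto
        (fun N => ∑ j ∈ Finset.range N,
          (Nat.choose (n + j - 1) j : ℂ) •
            ((((adjoint A) ^ j) ∘L (adjoint C ∘L C) ∘L (A ^ j)) x))
        atTop (nhds (G x)) := by
  have hH_pos : H.IsPositive := by
    have := h1.add h2
    rwa [sub_add_cancel] at this
  have hHbound : ∀ y : X, re ⟪H y, y⟫ ≤ ‖H‖ * ‖y‖ ^ 2 := by
    intro y
    calc re ⟪H y, y⟫ ≤ ‖(⟪H y, y⟫ : ℂ)‖ := RCLike.re_le_norm _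
      _ ≤ ‖H y‖ * ‖y‖ := norm_inner_le_norm _ _
      _ ≤ (‖H‖ * ‖y‖) * ‖y‖ := by gcongr; exact H.le_opNorm y
      _ = ‖H‖ * ‖y‖ ^ 2 := by ring
  have hmono : ∀ x : X, Monotone fun N => re ⟪Sop A C n N x, x⟫ := by
    intro x N M hNM
    dsimp only
    rw [Sop_re, Sop_re]
    refine Finset.sum_le_sum_of_subset_of_nonneg (Finset.range_subset_range.mpr hNM) ?_
    intro j _ _
    positivity
  have hle : ∀ (x : X) (N : ℕ), re ⟪Sop A C n N x, x⟫ ≤ re ⟪H x, x⟫ :=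
    fun x N => sop_re_le n hn A C H h1 h2 h3 x N
  have hsymm : ∀ N, IsSelfAdjoint (Sop A C n N) := fun N =>
    isSelfAdjoint_iff_isSymmetric.mpr fun x y => Sop_symm A C n N x y
  have hdiffre : ∀ (N M : ℕ) (x : X), re ⟪(Sop A C n M - Sop A C n N) x, x⟫
      = re ⟪Sop A C n M x, x⟫ - re ⟪Sop A C n N x, x⟫ := by
    intro N M x
    rw [sub_apply, inner_sub_left, map_sub]
  have hdiffpos : ∀ {N M : ℕ}, N ≤ M → (Sop A C n M - Sop A C n N).IsPositive := by
    intro N M hNM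
    refine isPositive_def'.mpr ⟨(hsymm M).sub (hsymm N), fun x => ?_⟩
    rw [reApplyInnerSelf_apply, hdiffre]
    have := hmono x hNM
    linarith
  have hSop_pos : ∀ N, (Sop A C n N).IsPositive := by
    intro N
    have h' := hdiffpos (Nat.zero_le N)
    have h0 : Sop A C n 0 = 0 := by simp [Sop]
    rwa [h0, sub_zero] at h'
  have hSopBd : ∀ (N : ℕ) (y : X), re ⟪Sop A C n N y, y⟫ ≤ ‖H‖ * ‖y‖ ^ 2 :=
    fun N y => (hle y N).trans (hHbound y)
  have hbdd : ∀ x, BddAbove (Set.range fun N => re ⟪Sop A C n N x, x⟫) := by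
    intro x
    refine ⟨re ⟪H x, x⟫, ?_⟩
    rintro r ⟨N, rfl⟩
    exact hle x N
  have htendl : ∀ x, Tendsto (fun N => re ⟪Sop A C n N x, x⟫) atTop
      (nhds (⨆ N, re ⟪Sop A C n N x, x⟫)) :=
    fun x => tendsto_atTop_ciSup (hmono x) (hbdd x)
  have hkey : ∀ (x : X) {p q : ℕ}, p ≤ q →
      ‖Sop A C n q x - Sop A C n p x‖
        ≤ Real.sqrt (re ⟪Sop A C n q x, x⟫ - re ⟪Sop A C n p x, x⟫) * Real.sqrt ‖H‖ := by
    intro x p q hpq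
    have hb : ∀ y, re ⟪(Sop A C n q - Sop A C n p) y, y⟫ ≤ ‖H‖ * ‖y‖ ^ 2 := by
      intro y
      rw [hdiffre]
      have := (hSop_pos p).re_inner_nonneg_left y
      have := hSopBd q y
      linarith
    have hthis := pos_norm_bound (hdiffpos hpq) (norm_nonneg H) hb x
    have e := hdiffre p q x
    rw [sub_apply] at e hthis
    rwa [e] at hthis
  have hCauchy : ∀ x, CauchySeq fun N => Sop A C n N x := by
    intro x
    set l : ℝ := ⨆ N, re ⟪Sop A C n N x, x⟫ with hl
    have hub : ∀ N, re ⟪Sop A C n N x, x⟫ ≤ l := fun N => le_ciSup (hbdd x) N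
    refine cauchySeq_of_le_tendsto_0
      (fun N => Real.sqrt (l - re ⟪Sop A C n N x, x⟫) * Real.sqrt ‖H‖) ?_ ?_
    · intro p q N hNp hNq
      have key2 : ∀ {p q : ℕ}, N ≤ p → p ≤ q →
          dist (Sop A C n p x) (Sop A C n q x)
            ≤ Real.sqrt (l - re ⟪Sop A C n N x, x⟫) * Real.sqrt ‖H‖ := by
        intro p q hNp hpq
        rw [dist_eq_norm, norm_sub_rev]
        refine (hkey x hpq).trans ?_
        have h5 : re ⟪Sop A C n q x, x⟫ - re ⟪Sop A C n p x, x⟫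
            ≤ l - re ⟪Sop A C n N x, x⟫ := by
          have := hub q
          have := hmono x hNp
          linarith
        exact mul_le_mul_of_nonneg_right (Real.sqrt_le_sqrt h5) (Real.sqrt_nonneg _)
      rcases le_total p q with h | h
      · exact key2 hNp h
      · rw [dist_comm]
        exact key2 hNq h
    · have t1 : Tendsto (fun N => l - re ⟪Sop A C n N x, x⟫) atTop (nhds 0) := by
        have hc : Tendsto (fun _ : ℕ => l) atTop (nhds l) := tendsto_const_nhds
        have h2' := hc.sub (htendl x)
        rwa [sub_self] at h2'
      have t2 := (t1.sqrt).mul_const (Real.sqrt ‖H‖)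
      rwa [Real.sqrt_zero, zero_mul] at t2
  have hconv : ∀ x, ∃ y, Tendsto (fun N => Sop A C n N x) atTop (nhds y) :=
    fun x => cauchySeq_tendsto_of_complete (hCauchy x)
  choose L hL using hconv
  have hnormS : ∀ (N : ℕ) (x : X), ‖Sop A C n N x‖ ≤ ‖H‖ * ‖x‖ := by
    intro N x
    have hb := pos_norm_bound (hSop_pos N) (norm_nonneg H) (hSopBd N) x
    refine hb.trans ?_
    calc Real.sqrt (re ⟪Sop A C n N x, x⟫) * Real.sqrt ‖H‖
        ≤ Real.sqrt (‖H‖ * ‖x‖ ^ 2) * Real.sqrt ‖H‖ := by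
          gcongr
          exact hSopBd N x
      _ = ‖H‖ * ‖x‖ := by
          rw [Real.sqrt_mul (norm_nonneg H), Real.sqrt_sq (norm_nonneg x)]
          rw [mul_comm (Real.sqrt ‖H‖) ‖x‖, mul_assoc, Real.mul_self_sqrt (norm_nonneg H)]
          ring
  have hLbound : ∀ x, ‖L x‖ ≤ ‖H‖ * ‖x‖ := fun x =>
    le_of_tendsto' (hL x).norm (fun N => hnormS N x) |>.trans le_rfl
  let Glin : X →ₗ[ℂ] X :=
    { toFun := L
      map_add' := fun x y => tendsto_nhds_unique (hL (x + y))
        (by simpa [map_add] using (hL x).add (hL y))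
      map_smul' := fun c x => tendsto_nhds_unique (hL (c • x))
        (by simpa [map_smul] using (hL x).const_smul c) }
  let G : X →L[ℂ] X := Glin.mkContinuous ‖H‖ hLbound
  have hGapp : ∀ x, G x = L x := fun x => rfl
  have hGre : ∀ x, Tendsto (fun N => re ⟪Sop A C n N x, x⟫) atTop (nhds (re ⟪G x, x⟫)) := by
    intro x
    rw [hGapp]
    exact (RCLike.continuous_re.tendsto _).comp ((hL x).inner tendsto_const_nhds)
  have hGpos : G.IsPositive := by
    constructor
    · intro x y
      have t1 : Tendsto (fun N => ⟪Sop A C n N x, y⟫) atTop (nhds ⟪L x, y⟫) :=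
        (hL x).inner tendsto_const_nhds
      have t2 : Tendsto (fun N => ⟪Sop A C n N x, y⟫) atTop (nhds ⟪x, L y⟫) := by
        rw [show (fun N => ⟪Sop A C n N x, y⟫) = fun N => ⟪x, Sop A C n N y⟫ from
          funext fun N => Sop_symm A C n N x y]
        exact tendsto_const_nhds.inner (hL y)
      exact tendsto_nhds_unique t1 t2
    · intro x
      rw [reApplyInnerSelf_apply]
      refine ge_of_tendsto' (hGre x) fun N => ?_
      exact (hSop_pos N).re_inner_nonneg_left x
  refine ⟨G, hGpos, ⟨hH_pos.1.sub hGpos.1, fun x => ?_⟩, fun x => ?_⟩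
  · rw [reApplyInnerSelf_apply, sub_apply, inner_sub_left, map_sub, sub_nonneg]
    exact le_of_tendsto' (hGre x) fun N => hle x N
  · rw [show (fun N => ∑ j ∈ Finset.range N, (Nat.choose (n + j - 1) j : ℂ) •
        ((((adjoint A) ^ j) ∘L (adjoint C ∘L C) ∘L (A ^ j)) x)) = fun N => Sop A C n N x from
      funext fun N => (Sop_apply A C n N x).symm]
    rw [hGapp]
    exact hL x

end OperatorLemmas

/-- A solution of the Stein inequalities dominates the strongly convergent
`n`-observability gramian. -/
theorem stmt_9 {X Y : Type*} [NormedAddCommGroup X] [InnerProductSpace ℂ X] [CompleteSpace X]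
    [NormedAddCommGroup Y] [InnerProductSpace ℂ Y] [CompleteSpace Y]
    (n : ℕ) (hn : 1 ≤ n) (A : X →L[ℂ] X) (C : X →L[ℂ] Y) (H : X →L[ℂ] X)
    (h1 : (H - adjoint A ∘L H ∘L A).IsPositive)
    (h2 : (adjoint A ∘L H ∘L A).IsPositive)
    (h3 : (Gamma A H n - adjoint C ∘L C).IsPositive) :
    ∃ G : X →L[ℂ] X, G.IsPositive ∧ (H - G).IsPositive ∧
      ∀ x, Tendsto
        (fun N => ∑ j ∈ Finset.range N,
          (Nat.choose (n + j - 1) j : ℂ) •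
            ((((adjoint A) ^ j) ∘L (adjoint C ∘L C) ∘L (A ^ j)) x))
        atTop (nhds (G x)) :=
  main_thm n hn A C H h1 h2 h3
end

section
/- On the weighted Bergman space A_n(Y), the shifted gramian of the model pair (E, S_n*) acts diagonally: 𝔊_{n,k,E,S_n*}: Σ_j f_j z^j ↦ Σ_j (μ_{n,j}/μ_{n,j+k}) f_j z^j, where μ_{n,j} = 1/C(j+n-1,j). Consequently 𝔊_{n,k,E,S_n*} ≥ I, so the model pair (E, S_n*) has strictly positive definite shifted gramians for all k ≥ 0. -/
lemma choose_step (a r : ℕ) :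
    (a + 1 + r).choose r * (a + 1) = (a + r).choose r * (a + r + 1) := by
  have h1 := Nat.add_one_mul_choose_eq (a + r) a
  have h2 : (a + r).choose a = (a + r).choose r := by
    have := Nat.choose_symm (show a ≤ a + r by omega)
    simpa [show a + r - a = r by omega] using this.symm
  have h3 : (a + r + 1).choose (a + 1) = (a + 1 + r).choose r := by
    have := Nat.choose_symm (show a + 1 ≤ a + r + 1 by omega)
    simpa [show a + r + 1 - (a + 1) = r by omega, show a + r + 1 = a + 1 + r by omega] using this.symm
  rw [← h3, ← h1, h2]
  simp [Nat.succ_mul]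
  ring

lemma choose_subadd (r m : ℕ) : ∀ k, (m + k + r).choose r ≤ (m + r).choose r * ((k + r).choose r)
  | 0 => by simpa using Nat.le_mul_of_pos_right _ (Nat.choose_pos (by omega))
  | k + 1 => by
    have IH := choose_subadd r m k
    have id1 : (m + (k + 1) + r).choose r * (m + k + 1) = (m + k + r).choose r * (m + k + r + 1) := by
      have := choose_step (m + k) r
      simpa [show m + k + 1 + r = m + (k + 1) + r by omega] using this
    have id2 : (k + 1 + r).choose r * (k + 1) = (k + r).choose r * (k + r + 1) := choose_step k r
    have hpos : 0 < (m + k + 1) * (k + 1) := by positivity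
    have key : (m + (k + 1) + r).choose r * ((m + k + 1) * (k + 1))
        ≤ (m + r).choose r * ((k + 1 + r).choose r) * ((m + k + 1) * (k + 1)) := by
      have e1 : (m + (k + 1) + r).choose r * ((m + k + 1) * (k + 1))
          = (m + k + r).choose r * (m + k + r + 1) * (k + 1) := by
        rw [← mul_assoc, id1]
      have e2 : (m + r).choose r * ((k + 1 + r).choose r) * ((m + k + 1) * (k + 1))
          = (m + r).choose r * ((k + r).choose r * (k + r + 1)) * (m + k + 1) := by
        rw [← id2]; ring
      rw [e1, e2]
      have hmul : (m + k + r + 1) * (k + 1) ≤ (k + r + 1) * (m + k + 1) := by nlinarith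
      calc (m + k + r).choose r * (m + k + r + 1) * (k + 1)
          ≤ (m + r).choose r * ((k + r).choose r) * ((m + k + r + 1) * (k + 1)) := by
            rw [mul_assoc]; exact Nat.mul_le_mul_right _ IH
        _ ≤ (m + r).choose r * ((k + r).choose r) * ((k + r + 1) * (m + k + 1)) :=
            Nat.mul_le_mul_left _ hmul
        _ = (m + r).choose r * ((k + r).choose r * (k + r + 1)) * (m + k + 1) := by ring
    exact Nat.le_of_mul_le_mul_right key hpos

/-- The weight `μ_{n,j} = 1 / C(j+n-1, j)` of the weighted Bergman space `A_n`. -/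
noncomputable def mu (n j : ℕ) : ℝ := 1 / (Nat.choose (j + n - 1) j : ℝ)

/-- The `j`-th power of the adjoint Bergman shift on coefficient sequences:
`(S_n^{*j} f)_m = (μ_{n,m+j}/μ_{n,m}) f_{m+j}`. -/
noncomputable def SstarPow {Y : Type*} [NormedAddCommGroup Y] [NormedSpace ℂ Y]
    (n j : ℕ) (f : ℕ → Y) : ℕ → Y :=
  fun m => (mu n (m + j) / mu n m) • f (m + j)

/-- The adjoint `E*` of the evaluation-at-zero operator `E : f ↦ f 0` on `A_n(Y)`. -/
def Estar {Y : Type*} [Zero Y] (y : Y) : ℕ → Y := fun m => if m = 0 then y else 0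

/-- The `j`-th power of the Bergman shift (multiplication by `z^j`) on sequences. -/
def SPow {Y : Type*} [Zero Y] (j : ℕ) (f : ℕ → Y) : ℕ → Y :=
  fun m => if j ≤ m then f (m - j) else 0

lemma mu_pos (n j : ℕ) (hn : 1 ≤ n) : 0 < mu n j := by
  have : 0 < (j + n - 1).choose j := Nat.choose_pos (by omega)
  unfold mu
  positivity

lemma mu_zero (n : ℕ) : mu n 0 = 1 := by simp [mu]

lemma mu_ratio (n m k : ℕ) (hn : 1 ≤ n) :
    mu n m / mu n (m + k) = ((m + k + n - 1).choose (m + k) : ℝ) * mu n m := by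
  have h2 : ((m + k + n - 1).choose (m + k) : ℝ) ≠ 0 := by
    exact_mod_cast (Nat.choose_pos (by omega : m + k ≤ m + k + n - 1)).ne'
  rw [show mu n (m + k) = 1 / ((m + k + n - 1).choose (m + k) : ℝ) from rfl]
  field_simp

lemma mu_ratio_ge_one (n m k : ℕ) (hn : 1 ≤ n) : 1 ≤ mu n m / mu n (m + k) := by
  rw [mu_ratio n m k hn]
  unfold mu
  rw [mul_one_div]
  rw [le_div_iff₀ (by exact_mod_cast Nat.choose_pos (by omega : m ≤ m + n - 1))]
  rw [one_mul]
  have h1 : (m + n - 1).choose m = (m + n - 1).choose (n - 1) := by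
    have := Nat.choose_symm (show m ≤ m + n - 1 by omega)
    simpa [show m + n - 1 - m = n - 1 by omega] using this.symm
  have h2 : (m + k + n - 1).choose (m + k) = (m + k + n - 1).choose (n - 1) := by
    have := Nat.choose_symm (show m + k ≤ m + k + n - 1 by omega)
    simpa [show m + k + n - 1 - (m + k) = n - 1 by omega] using this.symm
  have h3 : (m + n - 1).choose (n - 1) ≤ (m + k + n - 1).choose (n - 1) :=
    Nat.choose_le_choose _ (by omega)
  exact_mod_cast h1 ▸ h2 ▸ h3

lemma mu_ratio_le (n m k : ℕ) (hn : 1 ≤ n) :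
    mu n m / mu n (m + k) ≤ ((k + n - 1).choose k : ℝ) := by
  rw [mu_ratio n m k hn]
  unfold mu
  rw [mul_one_div]
  rw [div_le_iff₀ (by exact_mod_cast Nat.choose_pos (by omega : m ≤ m + n - 1))]
  have h1 : (m + n - 1).choose m = (m + n - 1).choose (n - 1) := by
    have := Nat.choose_symm (show m ≤ m + n - 1 by omega)
    simpa [show m + n - 1 - m = n - 1 by omega] using this.symm
  have h2 : (m + k + n - 1).choose (m + k) = (m + k + n - 1).choose (n - 1) := by
    have := Nat.choose_symm (show m + k ≤ m + k + n - 1 by omega)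
    simpa [show m + k + n - 1 - (m + k) = n - 1 by omega] using this.symm
  have h3 : (k + n - 1).choose k = (k + n - 1).choose (n - 1) := by
    have := Nat.choose_symm (show k ≤ k + n - 1 by omega)
    simpa [show k + n - 1 - k = n - 1 by omega] using this.symm
  have key : (m + k + (n - 1)).choose (n - 1)
      ≤ (k + (n - 1)).choose (n - 1) * ((m + (n - 1)).choose (n - 1)) := by
    have := choose_subadd (n - 1) k m
    simpa [show k + m = m + k by omega] using this
  have e1 : m + k + (n - 1) = m + k + n - 1 := by omega
  have e2 : k + (n - 1) = k + n - 1 := by omega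
  have e3 : m + (n - 1) = m + n - 1 := by omega
  rw [e1, e2, e3] at key
  rw [h1, h2, h3]
  exact_mod_cast key

/-- The shifted gramian of the model pair `(E, S_n*)` on `A_n(Y)` acts diagonally:
`𝔊_{n,k,E,S_n*} : Σ f_j z^j ↦ Σ (μ_{n,j}/μ_{n,j+k}) f_j z^j`, and consequently
`𝔊_{n,k,E,S_n*} ≥ I` in the metric of `A_n(Y)`. -/
theorem stmt_17 {Y : Type*} [NormedAddCommGroup Y] [InnerProductSpace ℂ Y] [CompleteSpace Y]
    (n k : ℕ) (hn : 1 ≤ n) :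
    (∀ (f : ℕ → Y) (m : ℕ),
      (∑' j : ℕ, (Nat.choose (n + j + k - 1) (j + k) : ℝ) •
          SPow j (Estar ((SstarPow n j f) 0)) m)
        = (mu n m / mu n (m + k)) • f m) ∧
    (∀ f : ℕ → Y, Summable (fun m => mu n m * ‖f m‖ ^ 2) →
      (∑' m : ℕ, mu n m * ‖f m‖ ^ 2)
        ≤ ∑' m : ℕ, mu n m * ((mu n m / mu n (m + k)) * ‖f m‖ ^ 2)) := by
  constructor
  · intro f m
    have hz : ∀ j : ℕ, j ≠ m →
        (Nat.choose (n + j + k - 1) (j + k) : ℝ) •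
          SPow j (Estar ((SstarPow n j f) 0)) m = 0 := by
      intro j hj
      unfold SPow Estar
      rcases lt_or_ge m j with h | h
      · simp [Nat.not_le.mpr h]
      · have : m - j ≠ 0 := by omega
        simp [h, this]
    rw [tsum_eq_single m hz]
    unfold SPow Estar SstarPow
    simp only [le_refl, if_true, Nat.sub_self, if_pos rfl, zero_add, mu_zero, div_one]
    rw [smul_smul, mu_ratio n m k hn,
      show n + m + k - 1 = m + k + n - 1 from by omega]
  · intro f hf
    have hterm : ∀ m : ℕ, mu n m * ‖f m‖ ^ 2
        ≤ mu n m * ((mu n m / mu n (m + k)) * ‖f m‖ ^ 2) := by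
      intro m
      have h1 := mu_ratio_ge_one n m k hn
      have h2 := (mu_pos n m hn).le
      exact mul_le_mul_of_nonneg_left (le_mul_of_one_le_left (sq_nonneg _) h1) h2
    have hsum2 : Summable (fun m => mu n m * ((mu n m / mu n (m + k)) * ‖f m‖ ^ 2)) := by
      apply Summable.of_nonneg_of_le
      · intro m
        have := (mu_pos n m hn).le
        have := (mu_ratio_ge_one n m k hn)
        positivity
      · intro m
        have h2 := (mu_pos n m hn).le
        have h3 := mu_ratio_le n m k hn
        calc mu n m * ((mu n m / mu n (m + k)) * ‖f m‖ ^ 2)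
            ≤ mu n m * (((k + n - 1).choose k : ℝ) * ‖f m‖ ^ 2) := by
              apply mul_le_mul_of_nonneg_left _ h2
              exact mul_le_mul_of_nonneg_right h3 (sq_nonneg _)
          _ = ((k + n - 1).choose k : ℝ) * (mu n m * ‖f m‖ ^ 2) := by ring
      · exact hf.mul_left _
    exact Summable.tsum_le_tsum hterm hf hsum2
end
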